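/- The leading Fourier–Jacobi coefficient of 1/χ₁₀ is the Katz–Klemm–Vafa series: writing 1/χ₁₀ = Σ_{n ≥ −1} ψ_n q̃^n with ψ_n ∈ q^{-1}·A[[q]], one has ψ_{−1} = −1/(Fsq · Δ); equivalently ψ_{−1} · Fsq · Δ = −1. -/

import Mathlib

noncomputable section

/-- The coefficient field `A = ℚ((p))` of formal Laurent series in `p`. -/
abbrev A : Type := LaurentSeries ℚ

/-- The Laurent variable `p ∈ A`. -/
def pL : A := HahnSeries.single 1 1

instance : TopologicalSpace A := ⊥

/-- The product (pi) topology on `R = A⟦q⟧`, coefficientwise. -/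
instance : TopologicalSpace (PowerSeries A) :=
  inferInstanceAs (TopologicalSpace ((Unit →₀ ℕ) → A))

/-- `Fsq`, the formal expansion in `A⟦q⟧` of the square of the Jacobi theta quotient
`F = ϑ₁(z,τ)/η(τ)³` in the region `0 < |q| < |p| < 1`:
`Fsq = −(p − 2 + p⁻¹) ∏_{m ≥ 1} (1 − p q^m)²(1 − p⁻¹ q^m)²(1 − q^m)^{−4}`. -/
def Fsq : PowerSeries A :=
  -(PowerSeries.C (R := A) (pL - 2 + pL⁻¹)) *
    ∏' m : ℕ,
      ((1 - PowerSeries.C (R := A) pL * PowerSeries.X ^ (m + 1)) ^ 2 *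
       (1 - PowerSeries.C (R := A) pL⁻¹ * PowerSeries.X ^ (m + 1)) ^ 2 *
       Ring.inverse ((1 - (PowerSeries.X : PowerSeries A) ^ (m + 1)) ^ 4))

/-- `∑_{k ≥ 1} k p^k ∈ A`, the expansion of `p/(1−p)²`. -/
def sumkpk : A := HahnSeries.ofPowerSeries ℤ ℚ (PowerSeries.mk fun k => (k : ℚ))

/-- The Weierstrass expansion
`℘ = 1/12 + ∑_{k ≥ 1} k p^k + ∑_{k,r ≥ 1} k (p^k − 2 + p^{−k}) q^{kr} ∈ A⟦q⟧`. -/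
def wp : PowerSeries A :=
  PowerSeries.C (R := A) (1 / 12 + sumkpk) +
    ∑' kr : ℕ × ℕ,
      PowerSeries.C (R := A) (((kr.1 + 1 : ℕ) : A) * (pL ^ (kr.1 + 1) - 2 + (pL⁻¹) ^ (kr.1 + 1))) *
        PowerSeries.X ^ ((kr.1 + 1) * (kr.2 + 1))

/-- `Z = −24·℘·Fsq ∈ A⟦q⟧`. -/
def Zjac : PowerSeries A := -24 * wp * Fsq

/-- The product (pi) topology on `A⟦q⟧⟦q̃⟧`, coefficientwise. -/
instance : TopologicalSpace (PowerSeries (PowerSeries A)) :=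
  inferInstanceAs (TopologicalSpace ((Unit →₀ ℕ) → PowerSeries A))

/-- Integer power in a ring (for invertible bases): `x^n` for `n ≥ 0`, and
`(x^{−n})⁻¹` (via `Ring.inverse`) for `n < 0`. -/
def fpow {R : Type*} [CommRing R] (x : R) (n : ℤ) : R :=
  if 0 ≤ n then x ^ n.toNat else Ring.inverse (x ^ (-n).toNat)

/-- The index set of the product defining `χ₁₀`: all `(k,h,d) ∈ ℤ × ℕ × ℕ` with
`h > 0` or `d > 0`, or `h = d = 0` and `k < 0`. -/
def chiIndex : Set (ℤ × ℕ × ℕ) :=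
  {x | 0 < x.2.1 ∨ 0 < x.2.2 ∨ (x.2.1 = 0 ∧ x.2.2 = 0 ∧ x.1 < 0)}

/-- The Igusa cusp form, as the Borcherds-type product
`χ₁₀ = p q q̃ ∏_{(k,h,d)} (1 − p^k q^h q̃^d)^{c(4hd − k²)} ∈ A⟦q,q̃⟧ = A⟦q⟧⟦q̃⟧`,
the product over all `k ∈ ℤ`, `h,d ≥ 0` with (`h > 0` or `d > 0`) or
(`h = d = 0` and `k < 0`). -/
def chi10 (c : ℤ → ℤ) : PowerSeries (PowerSeries A) :=
  PowerSeries.C (R := PowerSeries A) (PowerSeries.C (R := A) pL * PowerSeries.X) * PowerSeries.X *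
    ∏' i : chiIndex,
      fpow
        (1 - PowerSeries.C (R := PowerSeries A) (PowerSeries.C (R := A) (pL ^ (i.1.1 : ℤ)) *
              PowerSeries.X ^ i.1.2.1) * PowerSeries.X ^ i.1.2.2)
        (c (4 * (i.1.2.1 : ℤ) * (i.1.2.2 : ℤ) - (i.1.1) ^ 2))

/-- The discriminant `Δ = q ∏_{n ≥ 1} (1 − q^n)^24 ∈ A⟦q⟧`. -/
def Delta : PowerSeries A :=
  PowerSeries.X * ∏' n : ℕ, (1 - (PowerSeries.X : PowerSeries A) ^ (n + 1)) ^ 24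

/-- `K = A((q))`, the field of formal Laurent series in `q` over `A`. -/
abbrev K : Type := LaurentSeries A

/-- `M = K((q̃))`, the field of formal Laurent series in `q̃` over `K`. -/
abbrev M : Type := LaurentSeries K

noncomputable instance : Field M := @HahnSeries.instField ℤ K _ _ _ _

/-- The inclusion `A⟦q⟧ → K = A((q))`. -/
def ιR : PowerSeries A →+* K := HahnSeries.ofPowerSeries ℤ A

/-- `χ₁₀` viewed in the field `M`, where both `q` and `q̃` are inverted. -/
def chiM (c : ℤ → ℤ) : M :=
  HahnSeries.ofPowerSeries ℤ K (PowerSeries.map ιR (chi10 c))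

/-- The Fourier–Jacobi coefficients `ψ_n ∈ q⁻¹·A⟦q⟧ ⊆ K` of the expansion
`1/χ₁₀ = ∑_{n ≥ −1} ψ_n q̃^n`. -/
def psi (c : ℤ → ℤ) (n : ℤ) : K := ((chiM c)⁻¹).coeff n

namespace KKV
open PowerSeries Filter Finset Topology

instance : DiscreteTopology A := ⟨rfl⟩

private lemma tendsto_pi_unit {S : Type*} [TopologicalSpace S] {ι : Type*} {l : Filter ι}
    {F : ι → ((Unit →₀ ℕ) → S)} {g : (Unit →₀ ℕ) → S} :
    Filter.Tendsto F l (𝓝 g) ↔ ∀ m : ℕ,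
      Filter.Tendsto (fun i => F i (Finsupp.single () m)) l (𝓝 (g (Finsupp.single () m))) := by
  rw [tendsto_pi_nhds]
  refine ⟨fun h m => h _, fun h d => ?_⟩
  rw [show d = Finsupp.single () (d ()) from Finsupp.unique_single d]
  exact h _

lemma hasProd_R_iff {ι : Type*} {f : ι → PowerSeries A} {g : PowerSeries A} :
    HasProd f g ↔ ∀ m : ℕ, ∀ᶠ s : Finset ι in atTop,
      (PowerSeries.coeff (R := A) m) (∏ i ∈ s, f i) = PowerSeries.coeff (R := A) m g := by
  have h1 : HasProd f g ↔ ∀ m : ℕ, Filter.Tendsto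
      (fun s : Finset ι => (PowerSeries.coeff (R := A) m) (∏ i ∈ s, f i)) atTop
      (𝓝 (PowerSeries.coeff (R := A) m g)) := tendsto_pi_unit (S := A)
  rw [h1]
  refine forall_congr' fun m => ?_
  rw [nhds_discrete A]
  exact Filter.tendsto_pure

lemma hasSum_R_iff {ι : Type*} {f : ι → PowerSeries A} {g : PowerSeries A} :
    HasSum f g ↔ ∀ m : ℕ, ∀ᶠ s : Finset ι in atTop,
      (PowerSeries.coeff (R := A) m) (∑ i ∈ s, f i) = PowerSeries.coeff (R := A) m g := by
  have h1 : HasSum f g ↔ ∀ m : ℕ, Filter.Tendsto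
      (fun s : Finset ι => (PowerSeries.coeff (R := A) m) (∑ i ∈ s, f i)) atTop
      (𝓝 (PowerSeries.coeff (R := A) m g)) := tendsto_pi_unit (S := A)
  rw [h1]
  refine forall_congr' fun m => ?_
  rw [nhds_discrete A]
  exact Filter.tendsto_pure

/-- double coefficient -/
def dcf (n m : ℕ) (x : PowerSeries (PowerSeries A)) : A :=
  PowerSeries.coeff (R := A) m (PowerSeries.coeff (R := PowerSeries A) n x)

lemma hasProd_RR_iff {ι : Type*} {f : ι → PowerSeries (PowerSeries A)}
    {g : PowerSeries (PowerSeries A)} :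
    HasProd f g ↔ ∀ n m : ℕ, ∀ᶠ s : Finset ι in atTop,
      dcf n m (∏ i ∈ s, f i) = dcf n m g := by
  have h1 : HasProd f g ↔ ∀ n : ℕ, Filter.Tendsto
      (fun s : Finset ι => (PowerSeries.coeff (R := PowerSeries A) n) (∏ i ∈ s, f i)) atTop
      (𝓝 (PowerSeries.coeff (R := PowerSeries A) n g)) := tendsto_pi_unit (S := PowerSeries A)
  rw [h1]
  refine forall_congr' fun n => ?_
  have h2 : Filter.Tendsto
      (fun s : Finset ι => (PowerSeries.coeff (R := PowerSeries A) n) (∏ i ∈ s, f i)) atTop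
      (𝓝 (PowerSeries.coeff (R := PowerSeries A) n g)) ↔ ∀ m : ℕ, Filter.Tendsto
      (fun s : Finset ι => PowerSeries.coeff (R := A) m ((PowerSeries.coeff (R := PowerSeries A) n) (∏ i ∈ s, f i))) atTop
      (𝓝 (PowerSeries.coeff (R := A) m (PowerSeries.coeff (R := PowerSeries A) n g))) := tendsto_pi_unit (S := A)
  rw [h2]
  refine forall_congr' fun m => ?_
  rw [nhds_discrete A]
  exact Filter.tendsto_pure



open scoped Classical

/-- `x ≡ 1` in all `q`-coefficients `≤ m`. -/
def E1 (m : ℕ) (x : PowerSeries A) : Prop :=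
  ∀ j ≤ m, PowerSeries.coeff (R := A) j (x - 1) = 0

lemma coeff_mul_eq_zero {m : ℕ} {x : PowerSeries A} (h : ∀ j ≤ m, PowerSeries.coeff (R := A) j x = 0)
    (y : PowerSeries A) : ∀ j ≤ m, PowerSeries.coeff (R := A) j (x * y) = 0 := by
  intro j hj
  rw [PowerSeries.coeff_mul]
  refine Finset.sum_eq_zero fun p hp => ?_
  rw [Finset.HasAntidiagonal.mem_antidiagonal] at hp
  rw [h p.1 (le_trans (hp ▸ Nat.le_add_right p.1 p.2) hj), zero_mul]

lemma E1_one (m : ℕ) : E1 m 1 := by intro j _; simp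

lemma E1_mul {m : ℕ} {x y : PowerSeries A} (hx : E1 m x) (hy : E1 m y) : E1 m (x * y) := by
  intro j hj
  have : x * y - 1 = (x - 1) * y + (y - 1) := by ring
  rw [this, map_add, coeff_mul_eq_zero hx y j hj, hy j hj, add_zero]

lemma E1_pow {m : ℕ} {x : PowerSeries A} (hx : E1 m x) (n : ℕ) : E1 m (x ^ n) := by
  induction n with
  | zero => simpa using E1_one m
  | succ k ih => rw [pow_succ]; exact E1_mul ih hx

lemma E1_inverse {m : ℕ} {x : PowerSeries A} (hx : E1 m x) (hu : IsUnit x) :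
    E1 m (Ring.inverse x) := by
  intro j hj
  have h1 : Ring.inverse x - 1 = (x - 1) * (-(Ring.inverse x)) := by
    linear_combination Ring.mul_inverse_cancel x hu
  rw [h1]
  exact coeff_mul_eq_zero hx _ j hj

lemma E1_fpow {m : ℕ} {x : PowerSeries A} (hx : E1 m x) (hu : IsUnit x) (e : ℤ) :
    E1 m (fpow x e) := by
  unfold fpow
  split
  · exact E1_pow hx _
  · exact E1_inverse (E1_pow hx _) (hu.pow _)

lemma coeff_mul_E1 {m : ℕ} {x : PowerSeries A} (hx : E1 m x) (y : PowerSeries A) :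
    ∀ j ≤ m, PowerSeries.coeff (R := A) j (y * x) = PowerSeries.coeff (R := A) j y := by
  intro j hj
  have : y * x - y = (x - 1) * y := by ring
  have h0 : PowerSeries.coeff (R := A) j (y * x - y) = 0 := by
    rw [this]; exact coeff_mul_eq_zero hx y j hj
  rw [map_sub, sub_eq_zero] at h0
  exact h0

lemma stab_prod_R {ι : Type*} (f : ι → PowerSeries A) (F : Finset ι) (m : ℕ)
    (hf : ∀ i ∉ F, E1 m (f i)) :
    ∀ s : Finset ι, F ⊆ s →
      PowerSeries.coeff (R := A) m (∏ i ∈ s, f i) = PowerSeries.coeff (R := A) m (∏ i ∈ F, f i) := by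
  intro s hs
  rw [← Finset.prod_sdiff hs, mul_comm]
  have hE : E1 m (∏ i ∈ s \ F, f i) := by
    refine Finset.prod_induction f (E1 m) (fun _ _ => E1_mul) (E1_one m) fun i hi => ?_
    exact hf i (Finset.mem_sdiff.mp hi).2
  exact coeff_mul_E1 hE _ m le_rfl

/-- basic one-variable factor -/
lemma E1_base {m k : ℕ} (u : A) (hk : m < k) : E1 m (1 - PowerSeries.C (R := A) u * PowerSeries.X ^ k) := by
  intro j hj
  have : (1 - PowerSeries.C (R := A) u * PowerSeries.X ^ k - 1) = -(PowerSeries.C (R := A) u * PowerSeries.X ^ k) := by ring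
  rw [this, map_neg, PowerSeries.coeff_C_mul, PowerSeries.coeff_X_pow,
    if_neg (by omega), mul_zero, neg_zero]

lemma isUnit_base {k : ℕ} (u : A) (hk : 0 < k) :
    IsUnit (1 - PowerSeries.C (R := A) u * PowerSeries.X ^ k) := by
  rw [PowerSeries.isUnit_iff_constantCoeff, map_sub, map_one, map_mul,
    PowerSeries.constantCoeff_C, map_pow, PowerSeries.constantCoeff_X,
    zero_pow (by omega), mul_zero, sub_zero]
  exact isUnit_one

/-- same for 1 - X^k -/
lemma E1_baseX {m k : ℕ} (hk : m < k) : E1 m (1 - (PowerSeries.X : PowerSeries A) ^ k) := by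
  have := E1_base (m := m) (1 : A) hk
  rwa [map_one, one_mul] at this

lemma isUnit_baseX {k : ℕ} (hk : 0 < k) : IsUnit (1 - (PowerSeries.X : PowerSeries A) ^ k) := by
  have := isUnit_base (1 : A) hk
  rwa [map_one, one_mul] at this

/-! ### Two-variable versions -/

def E2 (n m : ℕ) (x : PowerSeries (PowerSeries A)) : Prop :=
  ∀ a ≤ n, ∀ b ≤ m, dcf a b (x - 1) = 0

lemma dcf_mul_eq_zero {n m : ℕ} {x : PowerSeries (PowerSeries A)}
    (h : ∀ a ≤ n, ∀ b ≤ m, dcf a b x = 0) (y : PowerSeries (PowerSeries A)) :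
    ∀ a ≤ n, ∀ b ≤ m, dcf a b (x * y) = 0 := by
  intro a ha b hb
  unfold dcf
  rw [PowerSeries.coeff_mul, map_sum]
  refine Finset.sum_eq_zero fun p hp => ?_
  rw [Finset.HasAntidiagonal.mem_antidiagonal] at hp
  rw [PowerSeries.coeff_mul]
  refine Finset.sum_eq_zero fun q hq => ?_
  rw [Finset.HasAntidiagonal.mem_antidiagonal] at hq
  have h1 : dcf p.1 q.1 x = 0 :=
    h p.1 (le_trans (hp ▸ Nat.le_add_right p.1 p.2) ha) q.1
      (le_trans (hq ▸ Nat.le_add_right q.1 q.2) hb)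
  unfold dcf at h1
  rw [h1, zero_mul]

lemma E2_one (n m : ℕ) : E2 n m 1 := by intro a _ b _; simp [dcf]

lemma E2_mul {n m : ℕ} {x y : PowerSeries (PowerSeries A)} (hx : E2 n m x) (hy : E2 n m y) :
    E2 n m (x * y) := by
  intro a ha b hb
  have : x * y - 1 = (x - 1) * y + (y - 1) := by ring
  unfold dcf
  rw [this, map_add, map_add]
  have h1 := dcf_mul_eq_zero hx y a ha b hb
  unfold dcf at h1
  rw [h1, zero_add]
  exact hy a ha b hb

lemma E2_pow {n m : ℕ} {x : PowerSeries (PowerSeries A)} (hx : E2 n m x) (k : ℕ) :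
    E2 n m (x ^ k) := by
  induction k with
  | zero => simpa using E2_one n m
  | succ k ih => rw [pow_succ]; exact E2_mul ih hx

lemma E2_inverse {n m : ℕ} {x : PowerSeries (PowerSeries A)} (hx : E2 n m x) (hu : IsUnit x) :
    E2 n m (Ring.inverse x) := by
  intro a ha b hb
  have h1 : Ring.inverse x - 1 = (x - 1) * (-(Ring.inverse x)) := by
    linear_combination Ring.mul_inverse_cancel x hu
  rw [h1]
  exact dcf_mul_eq_zero hx _ a ha b hb

lemma E2_fpow {n m : ℕ} {x : PowerSeries (PowerSeries A)} (hx : E2 n m x) (hu : IsUnit x) (e : ℤ) :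
    E2 n m (fpow x e) := by
  unfold fpow
  split
  · exact E2_pow hx _
  · exact E2_inverse (E2_pow hx _) (hu.pow _)

lemma dcf_mul_E2 {n m : ℕ} {x : PowerSeries (PowerSeries A)} (hx : E2 n m x)
    (y : PowerSeries (PowerSeries A)) : dcf n m (y * x) = dcf n m y := by
  have : y * x - y = (x - 1) * y := by ring
  have h0 : dcf n m (y * x - y) = 0 := by
    rw [this]; exact dcf_mul_eq_zero hx y n le_rfl m le_rfl
  unfold dcf at h0 ⊢
  rw [map_sub, map_sub, sub_eq_zero] at h0
  exact h0

lemma stab_prod_RR {ι : Type*} (f : ι → PowerSeries (PowerSeries A)) (F : Finset ι) (n m : ℕ)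
    (hf : ∀ i ∉ F, E2 n m (f i)) :
    ∀ s : Finset ι, F ⊆ s → dcf n m (∏ i ∈ s, f i) = dcf n m (∏ i ∈ F, f i) := by
  intro s hs
  rw [← Finset.prod_sdiff hs, mul_comm]
  have hE : E2 n m (∏ i ∈ s \ F, f i) := by
    refine Finset.prod_induction f (E2 n m) (fun _ _ => E2_mul) (E2_one n m) fun i hi => ?_
    exact hf i (Finset.mem_sdiff.mp hi).2
  exact dcf_mul_E2 hE _

/-! ### From stabilization to HasProd and coefficients -/

lemma hasProd_R_of_stab {ι : Type*} {f : ι → PowerSeries A} {g : PowerSeries A}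
    (h : ∀ m : ℕ, ∃ F : Finset ι, ∀ s : Finset ι, F ⊆ s →
      PowerSeries.coeff (R := A) m (∏ i ∈ s, f i) = PowerSeries.coeff (R := A) m g) : HasProd f g := by
  rw [hasProd_R_iff]
  intro m
  obtain ⟨F, hF⟩ := h m
  exact Filter.eventually_atTop.2 ⟨F, hF⟩

lemma hasSum_R_of_stab {ι : Type*} {f : ι → PowerSeries A} {g : PowerSeries A}
    (h : ∀ m : ℕ, ∃ F : Finset ι, ∀ s : Finset ι, F ⊆ s →
      PowerSeries.coeff (R := A) m (∑ i ∈ s, f i) = PowerSeries.coeff (R := A) m g) : HasSum f g := by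
  rw [hasSum_R_iff]
  intro m
  obtain ⟨F, hF⟩ := h m
  exact Filter.eventually_atTop.2 ⟨F, hF⟩

lemma hasProd_RR_of_stab {ι : Type*} {f : ι → PowerSeries (PowerSeries A)}
    {g : PowerSeries (PowerSeries A)}
    (h : ∀ n m : ℕ, ∃ F : Finset ι, ∀ s : Finset ι, F ⊆ s →
      dcf n m (∏ i ∈ s, f i) = dcf n m g) : HasProd f g := by
  rw [hasProd_RR_iff]
  intro n m
  obtain ⟨F, hF⟩ := h n m
  exact Filter.eventually_atTop.2 ⟨F, hF⟩

lemma coeff_of_hasProd_R {ι : Type*} {f : ι → PowerSeries A} {g : PowerSeries A}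
    (hg : HasProd f g) (m : ℕ) (F : Finset ι) (hf : ∀ i ∉ F, E1 m (f i)) :
    PowerSeries.coeff (R := A) m g = PowerSeries.coeff (R := A) m (∏ i ∈ F, f i) := by
  have h1 := (hasProd_R_iff.mp hg) m
  obtain ⟨s, hs1, hs2⟩ := (h1.and (Filter.eventually_ge_atTop F)).exists
  rw [← hs1, stab_prod_R f F m hf s hs2]

lemma dcf_of_hasProd_RR {ι : Type*} {f : ι → PowerSeries (PowerSeries A)}
    {g : PowerSeries (PowerSeries A)}
    (hg : HasProd f g) (n m : ℕ) (F : Finset ι) (hf : ∀ i ∉ F, E2 n m (f i)) :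
    dcf n m g = dcf n m (∏ i ∈ F, f i) := by
  have h1 := (hasProd_RR_iff.mp hg) n m
  obtain ⟨s, hs1, hs2⟩ := (h1.and (Filter.eventually_ge_atTop F)).exists
  rw [← hs1, stab_prod_RR f F n m hf s hs2]


/-! ### A-level computations -/

lemma pL_ne : pL ≠ 0 := HahnSeries.single_ne_zero one_ne_zero

lemma pinv : pL⁻¹ = HahnSeries.single (-1 : ℤ) (1 : ℚ) := by
  refine inv_eq_of_mul_eq_one_right ?_
  rw [pL, HahnSeries.single_mul_single, mul_one]
  norm_num

lemma pzpow (k : ℤ) : pL ^ k = HahnSeries.single k (1 : ℚ) := by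
  have hnat : ∀ n : ℕ, pL ^ n = HahnSeries.single (n : ℤ) (1 : ℚ) := by
    intro n
    induction n with
    | zero => simp
    | succ n ih =>
      rw [pow_succ, ih, pL, HahnSeries.single_mul_single, mul_one]
      norm_num
  rcases k with n | n
  · rw [Int.ofNat_eq_coe, zpow_natCast]; exact hnat n
  · rw [zpow_negSucc, hnat (n + 1)]
    refine inv_eq_of_mul_eq_one_right ?_
    rw [HahnSeries.single_mul_single, mul_one, Int.negSucc_eq,
      show (((n + 1 : ℕ) : ℤ) + -((n : ℤ) + 1) : ℤ) = 0 by push_cast; ring]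
    rfl

abbrev a0 : A := pL - 2 + pL⁻¹

lemma hcoeff_Cmul (r : ℚ) (x : A) (j : ℤ) :
    ((HahnSeries.single (0 : ℤ) r) * x).coeff j = r * x.coeff j := by
  have := HahnSeries.coeff_single_mul_add (r := r) (x := x) (a := j) (b := (0 : ℤ))
  simpa using this

lemma hcoeff_mulsingle (x : A) (b j : ℤ) :
    (x * HahnSeries.single b (1 : ℚ)).coeff j = x.coeff (j - b) := by
  have := HahnSeries.coeff_mul_single_add (r := (1 : ℚ)) (x := x) (a := j - b) (b := b)
  simpa using this

lemma Scoeff_nat (n : ℕ) : sumkpk.coeff (n : ℤ) = (n : ℚ) := by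
  rw [sumkpk, HahnSeries.ofPowerSeries_apply_coeff, PowerSeries.coeff_mk]

lemma Scoeff_neg (z : ℤ) (hz : z < 0) : sumkpk.coeff z = 0 := by
  rw [sumkpk, HahnSeries.ofPowerSeries_apply, HahnSeries.embDomain_notin_range]
  rintro ⟨n, hn⟩
  change ((n : ℕ) : ℤ) = _ at hn
  omega

lemma honetwelfth : (1 / 12 : A) = HahnSeries.single (0 : ℤ) (1 / 12 : ℚ) := by
  have h12 : (12 : A) = HahnSeries.single (0 : ℤ) (12 : ℚ) := by
    have := map_ofNat (HahnSeries.C : ℚ →+* A) 12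
    rw [← this]
    rfl
  rw [one_div, h12]
  refine inv_eq_of_mul_eq_one_right ?_
  rw [HahnSeries.single_mul_single]
  norm_num

lemma h2A : (2 : A) = HahnSeries.single (0 : ℤ) (2 : ℚ) := by
  have := map_ofNat (HahnSeries.C : ℚ →+* A) 2
  rw [← this]; rfl

lemma h24A : (24 : A) = HahnSeries.single (0 : ℤ) (24 : ℚ) := by
  have := map_ofNat (HahnSeries.C : ℚ →+* A) 24
  rw [← this]; rfl

def zA : A := -24 * ((1 / 12 : A) + sumkpk) * (-(a0))

lemma zA_expand : zA = HahnSeries.single (0 : ℤ) (24 : ℚ) *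
      (((1 / 12 : A) + sumkpk) * HahnSeries.single (1 : ℤ) (1 : ℚ))
    - HahnSeries.single (0 : ℤ) (24 : ℚ) *
      (HahnSeries.single (0 : ℤ) (2 : ℚ) * ((1 / 12 : A) + sumkpk))
    + HahnSeries.single (0 : ℤ) (24 : ℚ) *
      (((1 / 12 : A) + sumkpk) * HahnSeries.single (-1 : ℤ) (1 : ℚ)) := by
  rw [zA, a0, pinv, pL, ← h2A, ← h24A]
  ring

lemma wcoeff (j : ℤ) : ((1 / 12 : A) + sumkpk).coeff j
    = (if j = 0 then (1 / 12 : ℚ) else 0) + sumkpk.coeff j := by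
  rw [HahnSeries.coeff_add, honetwelfth, HahnSeries.coeff_single]
  by_cases h : j = 0 <;> simp [h]

lemma zAcoeff (j : ℤ) : zA.coeff j =
    24 * (((1 / 12 : A) + sumkpk).coeff (j - 1))
    - 24 * (2 * ((1 / 12 : A) + sumkpk).coeff j)
    + 24 * (((1 / 12 : A) + sumkpk).coeff (j + 1)) := by
  rw [zA_expand, HahnSeries.coeff_add, HahnSeries.coeff_sub, hcoeff_Cmul, hcoeff_Cmul,
    hcoeff_Cmul, hcoeff_Cmul, hcoeff_mulsingle, hcoeff_mulsingle, sub_neg_eq_add]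

lemma S0 : sumkpk.coeff (0 : ℤ) = 0 := by simpa using Scoeff_nat 0
lemma S1 : sumkpk.coeff (1 : ℤ) = 1 := by simpa using Scoeff_nat 1
lemma S2 : sumkpk.coeff (2 : ℤ) = 2 := by simpa using Scoeff_nat 2
lemma Sm1 : sumkpk.coeff (-1 : ℤ) = 0 := Scoeff_neg _ (by norm_num)

lemma zA1 : zA.coeff 1 = 2 := by
  rw [zAcoeff, show (1 : ℤ) - 1 = 0 by norm_num, show (1 : ℤ) + 1 = 2 by norm_num,
    wcoeff, wcoeff, wcoeff, S0, S1, S2]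
  norm_num

lemma zA0 : zA.coeff 0 = 20 := by
  rw [zAcoeff, show (0 : ℤ) - 1 = -1 by norm_num, show (0 : ℤ) + 1 = 1 by norm_num,
    wcoeff, wcoeff, wcoeff, S0, S1, Sm1]
  norm_num


/-! ### the one-variable infinite products -/

def f1 (m : ℕ) : PowerSeries A :=
  (1 - PowerSeries.C (R := A) pL * PowerSeries.X ^ (m + 1)) ^ 2 *
    (1 - PowerSeries.C (R := A) pL⁻¹ * PowerSeries.X ^ (m + 1)) ^ 2 *
    Ring.inverse ((1 - (PowerSeries.X : PowerSeries A) ^ (m + 1)) ^ 4)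

def f2 (n : ℕ) : PowerSeries A := (1 - (PowerSeries.X : PowerSeries A) ^ (n + 1)) ^ 24

def f3 (n : ℕ) : PowerSeries A :=
  (1 - (PowerSeries.X : PowerSeries A) ^ (n + 1)) ^ 20 *
    (1 - PowerSeries.C (R := A) pL * PowerSeries.X ^ (n + 1)) ^ 2 *
    (1 - PowerSeries.C (R := A) pL⁻¹ * PowerSeries.X ^ (n + 1)) ^ 2

lemma Fsq_eq : Fsq = -(PowerSeries.C (R := A) a0) * ∏' m, f1 m := rfl

lemma Delta_eq : Delta = PowerSeries.X * ∏' n, f2 n := rfl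

lemma E1_f1 {m i : ℕ} (h : m ≤ i) : E1 m (f1 i) :=
  E1_mul (E1_mul (E1_pow (E1_base pL (by omega)) 2) (E1_pow (E1_base pL⁻¹ (by omega)) 2))
    (E1_inverse (E1_pow (E1_baseX (by omega)) 4) ((isUnit_baseX (by omega)).pow 4))

lemma E1_f2 {m i : ℕ} (h : m ≤ i) : E1 m (f2 i) := E1_pow (E1_baseX (by omega)) 24

lemma hasProd_f1 : HasProd f1
    (PowerSeries.mk fun m => PowerSeries.coeff (R := A) m (∏ i ∈ Finset.range m, f1 i)) := by
  apply hasProd_R_of_stab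
  intro m
  refine ⟨Finset.range m, fun s hs => ?_⟩
  rw [PowerSeries.coeff_mk]
  exact stab_prod_R f1 (Finset.range m) m
    (fun i hi => E1_f1 (by simpa using hi)) s hs

lemma hasProd_f2 : HasProd f2
    (PowerSeries.mk fun m => PowerSeries.coeff (R := A) m (∏ i ∈ Finset.range m, f2 i)) := by
  apply hasProd_R_of_stab
  intro m
  refine ⟨Finset.range m, fun s hs => ?_⟩
  rw [PowerSeries.coeff_mk]
  exact stab_prod_R f2 (Finset.range m) m
    (fun i hi => E1_f2 (by simpa using hi)) s hs

lemma mult_f1 : Multipliable f1 := ⟨_, hasProd_f1⟩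
lemma mult_f2 : Multipliable f2 := ⟨_, hasProd_f2⟩

lemma coeff_U1 {j m : ℕ} (h : j ≤ m) :
    PowerSeries.coeff (R := A) j (∏' i, f1 i) = PowerSeries.coeff (R := A) j (∏ i ∈ Finset.range m, f1 i) :=
  coeff_of_hasProd_R mult_f1.hasProd j (Finset.range m)
    (fun i hi => E1_f1 (le_trans h (by simpa using hi)))

lemma coeff_U2 {j m : ℕ} (h : j ≤ m) :
    PowerSeries.coeff (R := A) j (∏' i, f2 i) = PowerSeries.coeff (R := A) j (∏ i ∈ Finset.range m, f2 i) :=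
  coeff_of_hasProd_R mult_f2.hasProd j (Finset.range m)
    (fun i hi => E1_f2 (le_trans h (by simpa using hi)))

/-! ### the sum in `wp` -/

def tkr (kr : ℕ × ℕ) : PowerSeries A :=
  PowerSeries.C (R := A) (((kr.1 + 1 : ℕ) : A) * (pL ^ (kr.1 + 1) - 2 + (pL⁻¹) ^ (kr.1 + 1))) *
    PowerSeries.X ^ ((kr.1 + 1) * (kr.2 + 1))

lemma wp_eq : wp = PowerSeries.C (R := A) (1 / 12 + sumkpk) + ∑' kr, tkr kr := rfl

lemma coeff_tkr_zero {m : ℕ} {kr : ℕ × ℕ}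
    (h : kr ∉ Finset.range (m + 1) ×ˢ Finset.range (m + 1)) :
    ∀ j ≤ m, PowerSeries.coeff (R := A) j (tkr kr) = 0 := by
  intro j hj
  rw [tkr, PowerSeries.coeff_C_mul, PowerSeries.coeff_X_pow, if_neg, mul_zero]
  simp only [Finset.mem_product, Finset.mem_range, not_and_or, not_lt] at h
  rcases h with h | h
  · have h1 : m + 2 ≤ (kr.1 + 1) * (kr.2 + 1) :=
      le_trans (by omega) (Nat.le_mul_of_pos_right _ (by omega))
    omega
  · have h1 : m + 2 ≤ (kr.1 + 1) * (kr.2 + 1) :=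
      le_trans (by omega) (Nat.le_mul_of_pos_left _ (by omega))
    omega

lemma hasSum_t : HasSum tkr (PowerSeries.mk fun m =>
    PowerSeries.coeff (R := A) m (∑ i ∈ Finset.range (m + 1) ×ˢ Finset.range (m + 1), tkr i)) := by
  apply hasSum_R_of_stab
  intro m
  refine ⟨Finset.range (m + 1) ×ˢ Finset.range (m + 1), fun s hs => ?_⟩
  rw [PowerSeries.coeff_mk, ← Finset.sum_sdiff hs, map_add, map_sum]
  rw [Finset.sum_eq_zero fun i hi =>
    coeff_tkr_zero (Finset.mem_sdiff.mp hi).2 m le_rfl, zero_add]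

lemma cont_cc : Continuous (PowerSeries.constantCoeff (R := A)) :=
  continuous_apply (0 : Unit →₀ ℕ)

lemma cc_sum : PowerSeries.constantCoeff (R := A) (∑' kr, tkr kr) = 0 := by
  have h1 : HasSum tkr (∑' kr, tkr kr) := hasSum_t.summable.hasSum
  have h2 := h1.map (PowerSeries.constantCoeff (R := A)) cont_cc
  have h3 : (⇑(PowerSeries.constantCoeff (R := A)) ∘ tkr) = fun _ => (0 : A) := by
    funext kr
    simp only [Function.comp_apply, tkr, map_mul, map_pow, PowerSeries.constantCoeff_C,
      PowerSeries.constantCoeff_X]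
    rw [zero_pow (by positivity), mul_zero]
  rw [h3] at h2
  exact h2.unique hasSum_zero

lemma cc_wp : PowerSeries.constantCoeff (R := A) wp = 1 / 12 + sumkpk := by
  rw [wp_eq, map_add, PowerSeries.constantCoeff_C, cc_sum, add_zero]

lemma cc_prod_f1 : PowerSeries.constantCoeff (R := A) (∏' i, f1 i) = 1 := by
  have h := coeff_U1 (j := 0) (m := 0) le_rfl
  rw [Finset.range_zero, Finset.prod_empty] at h
  rw [← PowerSeries.coeff_zero_eq_constantCoeff_apply, h]
  simp

lemma cc_prod_f2 : PowerSeries.constantCoeff (R := A) (∏' i, f2 i) = 1 := by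
  have h := coeff_U2 (j := 0) (m := 0) le_rfl
  rw [Finset.range_zero, Finset.prod_empty] at h
  rw [← PowerSeries.coeff_zero_eq_constantCoeff_apply, h]
  simp

lemma cc_Fsq : PowerSeries.constantCoeff (R := A) Fsq = -a0 := by
  rw [Fsq_eq, map_mul, map_neg, PowerSeries.constantCoeff_C, cc_prod_f1, mul_one]

lemma cc_Z : PowerSeries.constantCoeff (R := A) Zjac = zA := by
  rw [show Zjac = -24 * wp * Fsq from rfl, map_mul, map_mul, map_neg, map_ofNat,
    cc_wp, cc_Fsq, zA]


/-! ### fpow lemmas -/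

lemma fpow_zero' {R : Type*} [CommRing R] (x : R) : fpow x 0 = 1 := by
  rw [fpow, if_pos le_rfl, Int.toNat_zero, pow_zero]

lemma fpow_one_base {R : Type*} [CommRing R] (e : ℤ) : fpow (1 : R) e = 1 := by
  rw [fpow]
  split <;> simp

lemma fpow_two {R : Type*} [CommRing R] (x : R) : fpow x 2 = x ^ 2 := by
  rw [fpow, if_pos (by norm_num)]
  rfl

lemma fpow_twenty {R : Type*} [CommRing R] (x : R) : fpow x 20 = x ^ 20 := by
  rw [fpow, if_pos (by norm_num)]
  rfl

lemma map_ringInverse {R S : Type*} [CommRing R] [CommRing S] (φ : R →+* S) (y : R)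
    (hy : IsUnit y) : φ (Ring.inverse y) = Ring.inverse (φ y) := by
  obtain ⟨u, rfl⟩ := hy
  rw [Ring.inverse_unit, show φ ↑u = ↑(Units.map (φ : R →* S) u) from rfl, Ring.inverse_unit]
  exact (Units.coe_map_inv (φ : R →* S) u).symm

lemma map_fpow {R S : Type*} [CommRing R] [CommRing S] (φ : R →+* S) (x : R)
    (hx : IsUnit x) (e : ℤ) : φ (fpow x e) = fpow (φ x) e := by
  rw [fpow, fpow]
  split
  · rw [map_pow]
  · rw [map_ringInverse φ _ (hx.pow _), map_pow]

/-! ### the chi product family -/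

variable (c : ℤ → ℤ)

def fchi : ↥chiIndex → PowerSeries (PowerSeries A) := fun i =>
  fpow
    (1 - PowerSeries.C (R := PowerSeries A) (PowerSeries.C (R := A) (pL ^ (i.1.1 : ℤ)) *
          PowerSeries.X ^ i.1.2.1) * PowerSeries.X ^ i.1.2.2)
    (c (4 * (i.1.2.1 : ℤ) * (i.1.2.2 : ℤ) - (i.1.1) ^ 2))

lemma chi10_eq : chi10 c = PowerSeries.C (R := PowerSeries A) (PowerSeries.C (R := A) pL * PowerSeries.X) *
    PowerSeries.X * ∏' i, fchi c i := rfl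

lemma isUnit_chibase (k : ℤ) (h d : ℕ) (hmem : (k, h, d) ∈ chiIndex) :
    IsUnit (1 - PowerSeries.C (R := PowerSeries A) (PowerSeries.C (R := A) (pL ^ k) *
      PowerSeries.X ^ h) * PowerSeries.X ^ d) := by
  rcases d with _ | d
  · rw [pow_zero, mul_one, PowerSeries.isUnit_iff_constantCoeff, map_sub, map_one,
      PowerSeries.constantCoeff_C]
    rcases h with _ | h
    · rw [pow_zero, mul_one, PowerSeries.isUnit_iff_constantCoeff, map_sub, map_one,
        PowerSeries.constantCoeff_C]
      have hk : k < 0 := by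
        simpa [chiIndex] using hmem
      rw [isUnit_iff_ne_zero]
      intro h0
      have h1 : pL ^ k = 1 := by
        have := sub_eq_zero.mp h0
        linear_combination -this
      rw [pzpow] at h1
      have h2 := congrArg (fun y : A => y.coeff k) h1
      simp only [HahnSeries.coeff_single_same, HahnSeries.coeff_one] at h2
      rw [if_neg (by omega)] at h2
      exact one_ne_zero h2
    · exact isUnit_base (pL ^ k) (by omega)
  · rw [PowerSeries.isUnit_iff_constantCoeff, map_sub, map_one, map_mul,
      PowerSeries.constantCoeff_C, map_pow, PowerSeries.constantCoeff_X,
      zero_pow (by omega), mul_zero, sub_zero]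
    exact isUnit_one

lemma E2_chibase {n m : ℕ} (k : ℤ) (h d : ℕ) (hcase : n < d ∨ m < h) :
    E2 n m (1 - PowerSeries.C (R := PowerSeries A) (PowerSeries.C (R := A) (pL ^ k) *
      PowerSeries.X ^ h) * PowerSeries.X ^ d) := by
  intro a ha b hb
  have heq : (1 - PowerSeries.C (R := PowerSeries A) (PowerSeries.C (R := A) (pL ^ k) *
      PowerSeries.X ^ h) * PowerSeries.X ^ d) - 1 =
      -(PowerSeries.C (R := PowerSeries A) (PowerSeries.C (R := A) (pL ^ k) *
        PowerSeries.X ^ h) * PowerSeries.X ^ d) := by ring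
  unfold dcf
  rw [heq, map_neg, map_neg, PowerSeries.coeff_C_mul, PowerSeries.coeff_X_pow]
  rcases hcase with hc1 | hc1
  · rw [if_neg (by omega), mul_zero, map_zero, neg_zero]
  · by_cases had : a = d
    · rw [if_pos had, mul_one, PowerSeries.coeff_C_mul, PowerSeries.coeff_X_pow,
        if_neg (by omega), mul_zero, neg_zero]
    · rw [if_neg had, mul_zero, map_zero, neg_zero]

def Fc (n m : ℕ) : Finset ↥chiIndex :=
  ((Finset.Icc (-(2 * ((n : ℤ) + 1) * ((m : ℤ) + 1))) (2 * ((n : ℤ) + 1) * ((m : ℤ) + 1))) ×ˢ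
    Finset.range (m + 1) ×ˢ Finset.range (n + 1)).subtype (· ∈ chiIndex)

lemma Echi (hc0 : ∀ m : ℤ, m < -1 → c m = 0) (n m : ℕ) : ∀ i ∉ Fc n m, E2 n m (fchi c i) := by
  rintro ⟨⟨k, h, d⟩, hmem⟩ hnot
  show E2 n m (fpow _ _)
  by_cases hce : c (4 * (h : ℤ) * (d : ℤ) - k ^ 2) = 0
  · rw [hce, fpow_zero']
    exact E2_one n m
  · have hge : -1 ≤ 4 * (h : ℤ) * d - k ^ 2 := by
      by_contra hlt
      exact hce (hc0 _ (by omega))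
    have hcase : n < d ∨ m < h := by
      by_contra hcon
      push_neg at hcon
      apply hnot
      rw [Fc, Finset.mem_subtype]
      simp only [Finset.mem_product, Finset.mem_Icc, Finset.mem_range]
      have hd' : (d : ℤ) ≤ n := by exact_mod_cast hcon.1
      have hh' : (h : ℤ) ≤ m := by exact_mod_cast hcon.2
      have hk2 : k ^ 2 ≤ 4 * (h : ℤ) * d + 1 := by omega
      have hB : (0 : ℤ) < 2 * ((n : ℤ) + 1) * ((m : ℤ) + 1) := by positivity
      refine ⟨⟨?_, ?_⟩, by omega, by omega⟩
      · nlinarith [sq_nonneg (k + 2 * ((n : ℤ) + 1) * ((m : ℤ) + 1))]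
      · nlinarith [sq_nonneg (k - 2 * ((n : ℤ) + 1) * ((m : ℤ) + 1))]
    exact E2_fpow (E2_chibase k h d hcase) (isUnit_chibase k h d hmem) _

lemma hasProd_fchi (hc0 : ∀ m : ℤ, m < -1 → c m = 0) : HasProd (fchi c) (PowerSeries.mk fun n => PowerSeries.mk fun m =>
    dcf n m (∏ i ∈ Fc n m, fchi c i)) := by
  apply hasProd_RR_of_stab
  intro n m
  refine ⟨Fc n m, fun s hs => ?_⟩
  have hg : dcf n m (PowerSeries.mk fun n => PowerSeries.mk fun m =>
      dcf n m (∏ i ∈ Fc n m, fchi c i)) = dcf n m (∏ i ∈ Fc n m, fchi c i) := by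
    unfold dcf
    rw [PowerSeries.coeff_mk, PowerSeries.coeff_mk]
  rw [hg]
  exact stab_prod_RR (fchi c) (Fc n m) n m (Echi c hc0 n m) s hs

lemma mult_fchi (hc0 : ∀ m : ℤ, m < -1 → c m = 0) : Multipliable (fchi c) :=
  ⟨_, hasProd_fchi c hc0⟩

/-! ### the q̃-constant term of the chi product -/

def gRaw (x : ℤ × ℕ × ℕ) : PowerSeries A :=
  if x.2.2 = 0 then
    fpow (1 - PowerSeries.C (R := A) (pL ^ x.1) * PowerSeries.X ^ x.2.1)
      (c (4 * (x.2.1 : ℤ) * (x.2.2 : ℤ) - x.1 ^ 2))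
  else 1

lemma cont_cc2 : Continuous (PowerSeries.constantCoeff (R := PowerSeries A)) :=
  continuous_apply (0 : Unit →₀ ℕ)

lemma cc_fchi (i : ↥chiIndex) :
    PowerSeries.constantCoeff (R := PowerSeries A) (fchi c i) = gRaw c i.1 := by
  obtain ⟨⟨k, h, d⟩, hmem⟩ := i
  show PowerSeries.constantCoeff (R := PowerSeries A) (fpow _ _) = _
  rw [map_fpow _ _ (isUnit_chibase k h d hmem), gRaw]
  rcases d with _ | d
  · rw [if_pos rfl]
    congr 1
    rw [pow_zero, mul_one, map_sub, map_one, PowerSeries.constantCoeff_C]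
  · rw [if_neg (by simp), map_sub, map_one, map_mul, PowerSeries.constantCoeff_C,
      map_pow, PowerSeries.constantCoeff_X, zero_pow (by omega), mul_zero, sub_zero,
      fpow_one_base]

def Fc0 (m : ℕ) : Finset ↥chiIndex :=
  ((Finset.Icc (-1 : ℤ) 1) ×ˢ Finset.range (m + 1) ×ˢ ({0} : Finset ℕ)).subtype (· ∈ chiIndex)

lemma E1_gRaw (hc0 : ∀ m : ℤ, m < -1 → c m = 0) {m : ℕ} : ∀ i : ↥chiIndex, i ∉ Fc0 m → E1 m (gRaw c i.1) := by
  rintro ⟨⟨k, h, d⟩, hmem⟩ hnot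
  show E1 m (gRaw c (k, h, d))
  rcases d with _ | d
  swap
  · rw [gRaw, if_neg (by simp)]
    exact E1_one m
  rw [gRaw, if_pos rfl]
  by_cases hce : c (4 * (h : ℤ) * ((0 : ℕ) : ℤ) - k ^ 2) = 0
  · rw [hce, fpow_zero']
    exact E1_one m
  · have hge : -1 ≤ 4 * (h : ℤ) * ((0 : ℕ) : ℤ) - k ^ 2 := by
      by_contra hlt
      exact hce (hc0 _ (by omega))
    have hk2 : k ^ 2 ≤ 1 := by
      simpa using hge
    have hk : -1 ≤ k ∧ k ≤ 1 := by
      constructor <;> nlinarith [sq_nonneg (k + 1), sq_nonneg (k - 1)]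
    have hh : m < h := by
      by_contra hcon
      push_neg at hcon
      apply hnot
      rw [Fc0, Finset.mem_subtype]
      simp only [Finset.mem_product, Finset.mem_Icc, Finset.mem_range, Finset.mem_singleton]
      exact ⟨hk, by omega, by simp⟩
    exact E1_fpow (E1_base (pL ^ k) hh) (isUnit_base (pL ^ k) (by omega)) _


lemma gRaw_m1 (hcm1 : c (-1) = 2) (h : ℕ) :
    gRaw c (-1, h, 0) = (1 - PowerSeries.C (R := A) pL⁻¹ * PowerSeries.X ^ h) ^ 2 := by
  rw [gRaw, if_pos rfl,
    show (4 * (((-1 : ℤ), h, (0 : ℕ)).2.1 : ℤ) * (((-1 : ℤ), h, (0 : ℕ)).2.2 : ℤ)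
      - ((-1 : ℤ), h, (0 : ℕ)).1 ^ 2) = -1 by push_cast; ring, hcm1, fpow_two]
  norm_num

lemma gRaw_0 (hc00 : c 0 = 20) (h : ℕ) :
    gRaw c (0, h, 0) = (1 - (PowerSeries.X : PowerSeries A) ^ h) ^ 20 := by
  rw [gRaw, if_pos rfl,
    show (4 * (((0 : ℤ), h, (0 : ℕ)).2.1 : ℤ) * (((0 : ℤ), h, (0 : ℕ)).2.2 : ℤ)
      - ((0 : ℤ), h, (0 : ℕ)).1 ^ 2) = 0 by push_cast; ring, hc00, fpow_twenty]
  norm_num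

lemma gRaw_p1 (hcm1 : c (-1) = 2) (h : ℕ) :
    gRaw c (1, h, 0) = (1 - PowerSeries.C (R := A) pL * PowerSeries.X ^ h) ^ 2 := by
  rw [gRaw, if_pos rfl,
    show (4 * (((1 : ℤ), h, (0 : ℕ)).2.1 : ℤ) * (((1 : ℤ), h, (0 : ℕ)).2.2 : ℤ)
      - ((1 : ℤ), h, (0 : ℕ)).1 ^ 2) = -1 by push_cast; ring, hcm1, fpow_two]
  norm_num

lemma filter_eq (j : ℕ) :
    ((Finset.Icc (-1 : ℤ) 1 ×ˢ Finset.range (j + 1) ×ˢ ({0} : Finset ℕ)).filter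
        (· ∈ chiIndex)) =
      (Finset.Icc (-1 : ℤ) 1 ×ˢ Finset.Ico 1 (j + 1) ×ˢ ({0} : Finset ℕ)) ∪
        {((-1 : ℤ), 0, 0)} := by
  ext ⟨k, h, d⟩
  simp only [Finset.mem_filter, Finset.mem_product, Finset.mem_Icc, Finset.mem_range,
    Finset.mem_singleton, Finset.mem_union, Finset.mem_Ico, chiIndex, Set.mem_setOf_eq,
    Prod.mk.injEq]
  omega

lemma prod_Fc0 (hcm1 : c (-1) = 2) (hc00 : c 0 = 20) (j : ℕ) :
    (∏ i ∈ Fc0 j, gRaw c i.1) =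
      (1 - PowerSeries.C (R := A) pL⁻¹) ^ 2 * ∏ i ∈ Finset.range j, f3 i := by
  have h1 : (∏ i ∈ Fc0 j, gRaw c i.1) =
      ∏ x ∈ ((Finset.Icc (-1 : ℤ) 1 ×ˢ Finset.range (j + 1) ×ˢ ({0} : Finset ℕ)).filter
        (· ∈ chiIndex)), gRaw c x := by
    rw [← Finset.subtype_map (· ∈ chiIndex), Finset.prod_map]
    rfl
  rw [h1, filter_eq, Finset.prod_union, Finset.prod_singleton]
  swap
  · rw [Finset.disjoint_left]
    rintro ⟨k, h, d⟩ hx hx'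
    simp only [Finset.mem_product, Finset.mem_Icc, Finset.mem_Ico,
      Finset.mem_singleton] at hx
    simp only [Finset.mem_singleton, Prod.mk.injEq] at hx'
    omega
  have hsing : gRaw c ((-1 : ℤ), 0, 0) = (1 - PowerSeries.C (R := A) pL⁻¹) ^ 2 := by
    rw [gRaw_m1 c hcm1 0, pow_zero, mul_one]
  rw [hsing]
  have h2 : (∏ x ∈ (Finset.Icc (-1 : ℤ) 1 ×ˢ Finset.Ico 1 (j + 1) ×ˢ ({0} : Finset ℕ)),
      gRaw c x) = ∏ i ∈ Finset.range j, f3 i := by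
    rw [Finset.prod_product]
    have h3 : ∀ k : ℤ, (∏ y ∈ Finset.Ico 1 (j + 1) ×ˢ ({0} : Finset ℕ), gRaw c (k, y)) =
        ∏ h ∈ Finset.Ico 1 (j + 1), gRaw c (k, h, 0) := by
      intro k
      rw [Finset.prod_product]
      exact Finset.prod_congr rfl fun h _ => Finset.prod_singleton _ _
    rw [show Finset.Icc (-1 : ℤ) 1 = {-1, 0, 1} from rfl]
    rw [Finset.prod_insert (by decide), Finset.prod_insert (by decide),
      Finset.prod_singleton, h3, h3, h3, ← Finset.prod_mul_distrib,
      ← Finset.prod_mul_distrib, Finset.prod_Ico_eq_prod_range]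
    simp only [add_tsub_cancel_right]
    refine Finset.prod_congr rfl fun i _ => ?_
    rw [gRaw_m1 c hcm1, gRaw_0 c hc00, gRaw_p1 c hcm1, f3, show 1 + i = i + 1 by omega]
    ring
  rw [h2]
  ring

lemma hWcoeff (hc0 : ∀ m : ℤ, m < -1 → c m = 0) (hcm1 : c (-1) = 2) (hc00 : c 0 = 20)
    (j : ℕ) :
    PowerSeries.coeff (R := A) j
        (PowerSeries.constantCoeff (R := PowerSeries A) (∏' i, fchi c i)) =
      PowerSeries.coeff (R := A) j
        ((1 - PowerSeries.C (R := A) pL⁻¹) ^ 2 * ∏ i ∈ Finset.range j, f3 i) := by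
  have hW : HasProd (⇑(PowerSeries.constantCoeff (R := PowerSeries A)) ∘ fchi c)
      (PowerSeries.constantCoeff (R := PowerSeries A) (∏' i, fchi c i)) :=
    ((mult_fchi c hc0).hasProd).map _ cont_cc2
  have h1 := coeff_of_hasProd_R hW j (Fc0 j) (fun i hi => by
    have he : (⇑(PowerSeries.constantCoeff (R := PowerSeries A)) ∘ fchi c) i = gRaw c i.1 :=
      cc_fchi c i
    rw [he]
    exact E1_gRaw c hc0 i hi)
  rw [h1]
  have h2 : (∏ i ∈ Fc0 j, (⇑(PowerSeries.constantCoeff (R := PowerSeries A)) ∘ fchi c) i) =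
      ∏ i ∈ Fc0 j, gRaw c i.1 := Finset.prod_congr rfl fun i _ => cc_fchi c i
  rw [h2, prod_Fc0 c hcm1 hc00 j]

lemma f1_mul_f2 (i : ℕ) : f1 i * f2 i = f3 i := by
  have hu : IsUnit ((1 - (PowerSeries.X : PowerSeries A) ^ (i + 1)) ^ 4) :=
    (isUnit_baseX (by omega)).pow 4
  have hinv := Ring.mul_inverse_cancel _ hu
  rw [f1, f2, f3]
  linear_combination ((1 - PowerSeries.C (R := A) pL * PowerSeries.X ^ (i + 1)) ^ 2 *
    (1 - PowerSeries.C (R := A) pL⁻¹ * PowerSeries.X ^ (i + 1)) ^ 2 *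
    (1 - (PowerSeries.X : PowerSeries A) ^ (i + 1)) ^ 20) * hinv

lemma pL_identity : pL * (1 - pL⁻¹) ^ 2 = a0 := by
  have hinv : pL * pL⁻¹ = 1 := mul_inv_cancel₀ pL_ne
  linear_combination (pL⁻¹ - 2) * hinv

lemma coeff_one_chi (hc0 : ∀ m : ℤ, m < -1 → c m = 0) (hcm1 : c (-1) = 2)
    (hc00 : c 0 = 20) :
    PowerSeries.coeff (R := PowerSeries A) 1 (chi10 c) = -(Fsq * Delta) := by
  rw [chi10_eq]
  set T := ∏' i, fchi c i with hT
  have hL : PowerSeries.coeff (R := PowerSeries A) 1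
      (PowerSeries.C (R := PowerSeries A) (PowerSeries.C (R := A) pL * PowerSeries.X) *
        PowerSeries.X * T) =
      PowerSeries.C (R := A) pL * PowerSeries.X * PowerSeries.constantCoeff (R := PowerSeries A) T := by
    rw [show PowerSeries.C (R := PowerSeries A) (PowerSeries.C (R := A) pL * PowerSeries.X) *
        PowerSeries.X * T =
        PowerSeries.X * (PowerSeries.C (R := PowerSeries A)
          (PowerSeries.C (R := A) pL * PowerSeries.X) * T) by ring,
      show (1 : ℕ) = 0 + 1 from rfl, PowerSeries.coeff_succ_X_mul,
      PowerSeries.coeff_C_mul, PowerSeries.coeff_zero_eq_constantCoeff_apply]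
  rw [hL]
  have hR : -(Fsq * Delta) = PowerSeries.C (R := A) a0 * PowerSeries.X *
      ((∏' m, f1 m) * (∏' n, f2 n)) := by
    rw [Fsq_eq, Delta_eq]
    ring
  rw [hR]
  refine PowerSeries.ext fun m => ?_
  rcases m with _ | j
  · simp [map_mul, mul_comm, mul_assoc]
  · have hLc : PowerSeries.coeff (R := A) (j + 1)
        (PowerSeries.C (R := A) pL * PowerSeries.X * PowerSeries.constantCoeff (R := PowerSeries A) T) =
        pL * PowerSeries.coeff (R := A) j (PowerSeries.constantCoeff (R := PowerSeries A) T) := by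
      rw [show PowerSeries.C (R := A) pL * PowerSeries.X *
          PowerSeries.constantCoeff (R := PowerSeries A) T =
          PowerSeries.X * (PowerSeries.C (R := A) pL *
            PowerSeries.constantCoeff (R := PowerSeries A) T) by ring,
        PowerSeries.coeff_succ_X_mul, PowerSeries.coeff_C_mul]
    have hRc : PowerSeries.coeff (R := A) (j + 1) (PowerSeries.C (R := A) a0 * PowerSeries.X *
        ((∏' m, f1 m) * (∏' n, f2 n))) =
        a0 * PowerSeries.coeff (R := A) j ((∏' m, f1 m) * (∏' n, f2 n)) := by
      rw [show PowerSeries.C (R := A) a0 * PowerSeries.X * ((∏' m, f1 m) * (∏' n, f2 n)) =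
          PowerSeries.X * (PowerSeries.C (R := A) a0 * ((∏' m, f1 m) * (∏' n, f2 n))) by ring,
        PowerSeries.coeff_succ_X_mul, PowerSeries.coeff_C_mul]
    rw [hLc, hRc]
    have hprod : PowerSeries.coeff (R := A) j ((∏' m, f1 m) * (∏' n, f2 n)) =
        PowerSeries.coeff (R := A) j ((∏ i ∈ Finset.range j, f1 i) *
          (∏ i ∈ Finset.range j, f2 i)) := by
      rw [PowerSeries.coeff_mul, PowerSeries.coeff_mul]
      refine Finset.sum_congr rfl fun p hp => ?_
      rw [Finset.HasAntidiagonal.mem_antidiagonal] at hp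
      rw [coeff_U1 (show p.1 ≤ j by omega), coeff_U2 (show p.2 ≤ j by omega)]
    rw [hprod, ← Finset.prod_mul_distrib,
      Finset.prod_congr rfl (fun i _ => f1_mul_f2 i), hWcoeff c hc0 hcm1 hc00 j,
      show (1 : PowerSeries A) - PowerSeries.C (R := A) pL⁻¹ = PowerSeries.C (R := A) (1 - pL⁻¹) by
        rw [map_sub, map_one], ← map_pow, PowerSeries.coeff_C_mul]
    rw [← pL_identity]
    ring


/-! ### endgame -/

lemma cc_chi10 : PowerSeries.constantCoeff (R := PowerSeries A) (chi10 c) = 0 := by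
  rw [chi10_eq, map_mul, map_mul, PowerSeries.constantCoeff_X, mul_zero, zero_mul]

lemma a0_ne : a0 ≠ 0 := by
  have ha : a0 = HahnSeries.single (1 : ℤ) (1 : ℚ) - HahnSeries.single (0 : ℤ) (2 : ℚ)
      + HahnSeries.single (-1 : ℤ) (1 : ℚ) := by
    show pL - 2 + pL⁻¹ = _
    rw [pinv, h2A, pL]
  intro h
  rw [ha] at h
  have h1 := congrArg (fun y : A => y.coeff 1) h
  simp only [HahnSeries.coeff_add, HahnSeries.coeff_sub, HahnSeries.coeff_single,
    HahnSeries.coeff_zero] at h1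
  norm_num at h1

lemma Fsq_ne : Fsq ≠ 0 := by
  intro h
  have h1 := cc_Fsq
  rw [h, map_zero] at h1
  exact a0_ne (neg_eq_zero.mp h1.symm)

lemma Delta_ne : Delta ≠ 0 := by
  intro h
  have h1 : PowerSeries.coeff (R := A) 1 Delta = 1 := by
    rw [Delta_eq, show (1 : ℕ) = 0 + 1 from rfl, PowerSeries.coeff_succ_X_mul,
      PowerSeries.coeff_zero_eq_constantCoeff_apply, cc_prod_f2]
  rw [h, map_zero] at h1
  exact zero_ne_one h1

lemma chiM_coeff_nat (n : ℕ) : (chiM c).coeff (n : ℤ) =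
    ιR (PowerSeries.coeff (R := PowerSeries A) n (chi10 c)) := by
  rw [chiM, HahnSeries.ofPowerSeries_apply_coeff, PowerSeries.coeff_map]

lemma chiM_coeff_neg (z : ℤ) (hz : z < 0) : (chiM c).coeff z = 0 := by
  rw [chiM, HahnSeries.ofPowerSeries_apply, HahnSeries.embDomain_notin_range]
  rintro ⟨n, hn⟩
  change ((n : ℕ) : ℤ) = _ at hn
  omega

lemma chiM_coeff_zero : (chiM c).coeff (0 : ℤ) = 0 := by
  have h := chiM_coeff_nat c 0
  rw [show ((0 : ℕ) : ℤ) = (0 : ℤ) by norm_num] at h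
  rw [h, PowerSeries.coeff_zero_eq_constantCoeff_apply, cc_chi10, map_zero]

lemma iR_inj : Function.Injective ιR := HahnSeries.ofPowerSeries_injective

end KKV

/-- The leading Fourier–Jacobi coefficient of `1/χ₁₀` is the Katz–Klemm–Vafa series:
`ψ_{−1} = −1/(Fsq·Δ)`, equivalently `ψ_{−1}·Fsq·Δ = −1`. -/


theorem psi_neg_one_eq_KKV (c : ℤ → ℤ)
    (hc0 : ∀ m : ℤ, m < -1 → c m = 0)
    (hc : ∀ n : ℕ, ∀ k : ℤ, (PowerSeries.coeff (R := A) n Zjac).coeff k = ((c (4 * n - k ^ 2) : ℤ) : ℚ)) :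
    psi c (-1) * ιR Fsq * ιR Delta = -1 := by
  have hcm1 : c (-1) = 2 := by
    have h := hc 0 1
    rw [PowerSeries.coeff_zero_eq_constantCoeff_apply, KKV.cc_Z] at h
    norm_num at h
    rw [KKV.zA1] at h
    exact_mod_cast h.symm
  have hc00 : c 0 = 20 := by
    have h := hc 0 0
    rw [PowerSeries.coeff_zero_eq_constantCoeff_apply, KKV.cc_Z] at h
    norm_num at h
    rw [KKV.zA0] at h
    exact_mod_cast h.symm
  have key := KKV.coeff_one_chi c hc0 hcm1 hc00
  have hFD : -(Fsq * Delta) ≠ 0 := by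
    simp only [ne_eq, neg_eq_zero]
    exact mul_ne_zero KKV.Fsq_ne KKV.Delta_ne
  have hcoeff1 : (chiM c).coeff (1 : ℤ) = ιR (-(Fsq * Delta)) := by
    have h := KKV.chiM_coeff_nat c 1
    rw [show ((1 : ℕ) : ℤ) = (1 : ℤ) by norm_num] at h
    rw [h, key]
  have hcoeff1ne : (chiM c).coeff (1 : ℤ) ≠ 0 := by
    rw [hcoeff1]
    intro h
    exact hFD (KKV.iR_inj (by rw [h, map_zero]))
  have hne : chiM c ≠ 0 := fun h => hcoeff1ne (by rw [h]; rfl)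
  have hzero_le : ∀ z : ℤ, z ≤ 0 → (chiM c).coeff z = 0 := by
    intro z hz
    rcases lt_or_eq_of_le hz with h | h
    · exact KKV.chiM_coeff_neg c z h
    · rw [h]; exact KKV.chiM_coeff_zero c
  have horder : (chiM c).order = 1 := by
    have hle : (chiM c).order ≤ 1 := HahnSeries.order_le_of_coeff_ne_zero hcoeff1ne
    have hge : 1 ≤ (chiM c).order := by
      by_contra hlt
      push_neg at hlt
      exact (mt HahnSeries.coeff_order_eq_zero.mp hne) (hzero_le _ (by omega))
    omega
  have hy : (chiM c)⁻¹ * chiM c = 1 := inv_mul_cancel₀ hne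
  have hyne : (chiM c)⁻¹ ≠ 0 := inv_ne_zero hne
  have h2 : ((chiM c)⁻¹ * chiM c).order = 0 := by rw [hy]; exact @HahnSeries.order_one ℤ K _ _ _
  have hordmul : ((chiM c)⁻¹).order + (chiM c).order = 0 :=
    (HahnSeries.order_mul hyne hne).symm.trans h2
  have hordinv : ((chiM c)⁻¹).order = -1 := by omega
  have hmco := HahnSeries.coeff_mul_order_add_order ((chiM c)⁻¹) (chiM c)
  rw [HahnSeries.leadingCoeff_eq, HahnSeries.leadingCoeff_eq, hordinv, horder] at hmco
  have hL1 : ((chiM c)⁻¹ * chiM c).coeff ((-1 : ℤ) + 1) = 1 :=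
    (congrArg (fun y : M => y.coeff ((-1 : ℤ) + 1)) hy).trans (by simp [HahnSeries.coeff_one])
  have h8 := hL1.symm.trans hmco
  rw [hcoeff1] at h8
  have hpsi : psi c (-1) = ((chiM c)⁻¹).coeff (-1) := rfl
  rw [hpsi]
  have hmap : ιR (-(Fsq * Delta)) = -(ιR Fsq * ιR Delta) := by rw [map_neg, map_mul]
  rw [hmap] at h8
  linear_combination h8


end
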